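/- Let A, A_k, Â_k ∈ ℝ^{n×n}, b ∈ ℝ^n, 0 < c_sat < 1 and α ≥ 0. Suppose x_k ∈ ℝ^n satisfies the inexact-solve condition ‖b − A_k x_k‖₂ ≤ α ‖(A_k − Â_k) x_k‖₂ and the saturation assumption ‖Â_k x_k − A x_k‖₂ ≤ c_sat ‖A_k x_k − A x_k‖₂ holds. Then the residual of the true system satisfies ‖b − A x_k‖₂ ≤ ((1 + α(1 + c_sat))/(1 − c_sat)) ‖(A_k − Â_k) x_k‖₂. -/
import Mathlib

/-- Reliability, first inequality: under the inexact-solve condition and the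
saturation assumption, `‖b - A x_k‖ ≤ ((1 + α(1+c_sat))/(1-c_sat)) ‖(A_k - Â_k) x_k‖`. -/
theorem stmt_6 (n : ℕ)
    (A Ak Ahk : EuclideanSpace ℝ (Fin n) →L[ℝ] EuclideanSpace ℝ (Fin n))
    (b xk : EuclideanSpace ℝ (Fin n)) (csat α : ℝ)
    (hc0 : 0 < csat) (hc1 : csat < 1) (hα : 0 ≤ α)
    (hsolve : ‖b - Ak xk‖ ≤ α * ‖Ak xk - Ahk xk‖)
    (hsat : ‖Ahk xk - A xk‖ ≤ csat * ‖Ak xk - A xk‖) :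
    ‖b - A xk‖ ≤ (1 + α * (1 + csat)) / (1 - csat) * ‖Ak xk - Ahk xk‖ := by
  have t1 : ‖Ak xk - A xk‖ ≤ ‖Ak xk - Ahk xk‖ + ‖Ahk xk - A xk‖ := by
    simpa using norm_add_le (Ak xk - Ahk xk) (Ahk xk - A xk)
  have t2 : ‖b - A xk‖ ≤ ‖b - Ak xk‖ + ‖Ak xk - A xk‖ := by
    simpa using norm_add_le (b - Ak xk) (Ak xk - A xk)
  have he : (0:ℝ) ≤ ‖Ak xk - Ahk xk‖ := norm_nonneg _
  have hs : (0:ℝ) ≤ ‖Ak xk - A xk‖ := norm_nonneg _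
  have hpos : (0:ℝ) < 1 - csat := by linarith
  rw [div_mul_eq_mul_div, le_div_iff₀ hpos]
  nlinarith [mul_nonneg hα he, mul_nonneg (mul_nonneg hα he) hc0.le,
    mul_nonneg hc0.le hs]
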